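/- arXiv:1901.01793 — 2 statements merged into one kernel-verified Lean document; each statement's English description precedes it below -/
import Mathlib

section
/- Let X ~ Gamma(α, 1) with α > 1 (respectively α < 1) and let s ≥ 1 be an integer. Then the failure rate of the s-iterated distribution induced by X, namely the function x ↦ (d/dx)(−log T̄_s(x)), is increasing (respectively decreasing) on (0,∞). -/
open MeasureTheory Set Real

/-- Density of `Gamma(α, 1)` with real shape `α > 0`. -/
noncomputable def gammaDens (a t : ℝ) : ℝ :=
  t ^ (a - 1) * Real.exp (-t) / Real.Gamma a

/-- Tail of the s-iterated distribution induced by a density `g`: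
`T̄_s(x) = E[(X-x)_+^{s-1}] / E[X^{s-1}]`. -/
noncomputable def iterTail (g : ℝ → ℝ) (s : ℕ) (x : ℝ) : ℝ :=
  (∫ t in Set.Ioi x, (t - x) ^ (s - 1) * g t) /
    (∫ t in Set.Ioi (0 : ℝ), t ^ (s - 1) * g t)

open Filter

noncomputable def II (b : ℝ) (k : ℕ) (x : ℝ) : ℝ :=
  ∫ u in Set.Ioi (0:ℝ), u ^ k * (x + u) ^ b * Real.exp (-u)

lemma tend0 (b c : ℝ) (hc : 0 < c) (k : ℕ) (x : ℝ) :
    Tendsto (fun u : ℝ => u ^ k * (x + u) ^ b * Real.exp (-(c * u))) atTop (nhds 0) := by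
  have h1 : Tendsto (fun u : ℝ => u ^ (k:ℝ) * Real.exp (-(c/2) * u)) atTop (nhds 0) :=
    tendsto_rpow_mul_exp_neg_mul_atTop_nhds_zero _ _ (by positivity)
  have h2 : Tendsto (fun t : ℝ => t ^ b * Real.exp (-(c/2) * t)) atTop (nhds 0) :=
    tendsto_rpow_mul_exp_neg_mul_atTop_nhds_zero _ _ (by positivity)
  have h3 : Tendsto (fun u : ℝ => (x + u) ^ b * Real.exp (-(c/2) * (x + u))) atTop (nhds 0) :=
    h2.comp (tendsto_atTop_add_const_left atTop x tendsto_id)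
  have h4 := (h1.mul (h3.const_mul (Real.exp (c/2 * x))))
  rw [mul_zero, zero_mul] at h4
  refine h4.congr' ?_
  filter_upwards [eventually_gt_atTop (0:ℝ)] with u hu
  rw [Real.rpow_natCast]
  calc u ^ k * Real.exp (-(c/2) * u) * (Real.exp (c/2 * x) * ((x + u) ^ b * Real.exp (-(c/2) * (x + u))))
      = u ^ k * (x + u) ^ b * (Real.exp (-(c/2) * u) * Real.exp (c/2 * x) * Real.exp (-(c/2) * (x + u))) := by
        ring
    _ = u ^ k * (x + u) ^ b * Real.exp (-(c * u)) := by
        rw [← Real.exp_add, ← Real.exp_add]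
        exact congrArg (fun t => u ^ k * (x + u) ^ b * Real.exp t) (by ring)

lemma contOn (b : ℝ) (k : ℕ) {x : ℝ} (hx : 0 < x) :
    ContinuousOn (fun u : ℝ => u ^ k * (x + u) ^ b * Real.exp (-u)) (Ici 0) := by
  refine ContinuousOn.mul (ContinuousOn.mul ?_ ?_) ?_
  · exact (continuous_pow k).continuousOn
  · refine ContinuousOn.rpow_const (by fun_prop) ?_
    intro u hu
    left
    have : (0:ℝ) ≤ u := hu
    positivity
  · fun_prop

lemma ibd {b x : ℝ} (hx : 0 < x) (k : ℕ) :
    IntegrableOn (fun u : ℝ => u ^ k * (x + u) ^ b * Real.exp (-u)) (Ioi 0) := by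
  refine integrable_of_isBigO_exp_neg (b := 1/2) one_half_pos (contOn b k hx) ?_
  rw [Asymptotics.isBigO_iff]
  refine ⟨1, ?_⟩
  have h := (tend0 b (1/2) one_half_pos k x).eventually (Metric.ball_mem_nhds (0:ℝ) one_pos)
  filter_upwards [h, eventually_ge_atTop (0:ℝ)] with u hu hu0
  rw [dist_zero_right] at hu
  have he : Real.exp (-u) = Real.exp (-(1/2 * u)) * Real.exp (-(1/2 * u)) := by
    rw [← Real.exp_add]; congr 1; ring
  have h12 : Real.exp (-(1/2 : ℝ) * u) = Real.exp (-(1/2 * u)) := by norm_num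
  rw [h12]
  calc ‖u ^ k * (x + u) ^ b * Real.exp (-u)‖
      = ‖u ^ k * (x + u) ^ b * Real.exp (-(1/2 * u))‖ * ‖Real.exp (-(1/2 * u))‖ := by
        rw [← norm_mul]; congr 1; rw [he]; ring
    _ ≤ 1 * ‖Real.exp (-(1/2 * u))‖ :=
        mul_le_mul_of_nonneg_right (le_of_lt hu) (norm_nonneg _)

lemma II_pos {b x : ℝ} (hx : 0 < x) (k : ℕ) : 0 < II b k x := by
  rw [II]
  rw [setIntegral_pos_iff_support_of_nonneg_ae]
  · have hsub : Ioi (0:ℝ) ⊆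
        (Function.support fun u : ℝ => u ^ k * (x + u) ^ b * Real.exp (-u)) ∩ Ioi 0 := by
      intro u hu
      have hu' : (0:ℝ) < u := hu
      refine ⟨?_, hu⟩
      simp only [Function.mem_support]
      positivity
    calc (0:ENNReal) < volume (Ioi (0:ℝ)) := by simp [Real.volume_Ioi]
      _ ≤ _ := measure_mono hsub
  · filter_upwards [ae_restrict_mem measurableSet_Ioi] with u hu
    have hu' : (0:ℝ) < u := hu
    positivity
  · exact ibd hx k

lemma aesm (b : ℝ) (k : ℕ) {x : ℝ} (hx : 0 < x) :
    AEStronglyMeasurable (fun u : ℝ => u ^ k * (x + u) ^ b * Real.exp (-u))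
      (volume.restrict (Ioi 0)) :=
  ((contOn b k hx).mono Ioi_subset_Ici_self).aestronglyMeasurable measurableSet_Ioi

lemma hasDerivAt_II (b : ℝ) (k : ℕ) {x : ℝ} (hx : 0 < x) :
    HasDerivAt (fun y => II b k y) (b * II (b-1) k x) x := by
  have hx2 : 0 < x/2 := by linarith
  have h2x : 0 < 2*x := by linarith
  have key := hasDerivAt_integral_of_dominated_loc_of_deriv_le (μ := volume.restrict (Ioi 0))
    (F := fun y u => u ^ k * (y + u) ^ b * Real.exp (-u))
    (F' := fun y u => b * (u ^ k * (y + u) ^ (b-1) * Real.exp (-u)))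
    (x₀ := x)
    (bound := fun u => |b| * (u ^ k * (x/2 + u) ^ (b-1) * Real.exp (-u))
      + |b| * (u ^ k * (2*x + u) ^ (b-1) * Real.exp (-u)))
    (Metric.ball_mem_nhds x (half_pos hx))
    (eventually_of_mem (Metric.ball_mem_nhds x (half_pos hx)) fun y hy => by
      rw [Metric.mem_ball, Real.dist_eq, abs_lt] at hy
      exact aesm b k (by linarith : (0:ℝ) < y))
    (ibd hx k)
    ((aesm (b-1) k hx).const_mul b)
    ?_ ?_ ?_
  · rw [show b * II (b-1) k x = ∫ u in Ioi (0:ℝ), b * (u ^ k * (x + u) ^ (b-1) * Real.exp (-u))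
      from (integral_const_mul b _).symm]
    exact key.2
  · -- h_bound
    filter_upwards [ae_restrict_mem measurableSet_Ioi] with u hu
    intro y hy
    have hu' : (0:ℝ) < u := hu
    rw [Metric.mem_ball, Real.dist_eq, abs_lt] at hy
    have hylo : x/2 < y := by linarith
    have hyhi : y < 2*x := by linarith
    have hyu : (0:ℝ) < y + u := by linarith
    have hnorm : ‖b * (u ^ k * (y + u) ^ (b-1) * Real.exp (-u))‖
        = |b| * (u ^ k * ((y + u) ^ (b-1) * Real.exp (-u))) := by
      rw [norm_eq_abs, abs_mul]
      congr 1
      rw [abs_of_nonneg (by positivity)]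
      ring
    rw [hnorm]
    have hk : (0:ℝ) < u ^ k := pow_pos hu' k
    have hexp : (0:ℝ) < Real.exp (-u) := Real.exp_pos _
    rcases le_or_gt 0 (b-1) with hb1 | hb1
    · have h1 : (y + u) ^ (b-1) ≤ (2*x + u) ^ (b-1) :=
        Real.rpow_le_rpow (by positivity) (by linarith) hb1
      have h2 : (0:ℝ) ≤ |b| * (u ^ k * (x/2 + u) ^ (b-1) * Real.exp (-u)) := by positivity
      have h3 : |b| * (u ^ k * ((y+u) ^ (b-1) * Real.exp (-u)))
          ≤ |b| * (u ^ k * (2*x + u) ^ (b-1) * Real.exp (-u)) := by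
        apply mul_le_mul_of_nonneg_left _ (abs_nonneg b)
        rw [mul_assoc]
        exact mul_le_mul_of_nonneg_left
          (mul_le_mul_of_nonneg_right h1 hexp.le) hk.le
      linarith
    · have h1 : (y + u) ^ (b-1) ≤ (x/2 + u) ^ (b-1) :=
        Real.rpow_le_rpow_of_nonpos (by positivity) (by linarith) (le_of_lt hb1)
      have h2 : (0:ℝ) ≤ |b| * (u ^ k * (2*x + u) ^ (b-1) * Real.exp (-u)) := by positivity
      have h3 : |b| * (u ^ k * ((y+u) ^ (b-1) * Real.exp (-u)))
          ≤ |b| * (u ^ k * (x/2 + u) ^ (b-1) * Real.exp (-u)) := by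
        apply mul_le_mul_of_nonneg_left _ (abs_nonneg b)
        rw [mul_assoc]
        exact mul_le_mul_of_nonneg_left
          (mul_le_mul_of_nonneg_right h1 hexp.le) hk.le
      linarith
  · -- bound integrable
    exact ((ibd hx2 k).const_mul |b|).add ((ibd h2x k).const_mul |b|)
  · -- h_diff
    filter_upwards [ae_restrict_mem measurableSet_Ioi] with u hu
    intro y hy
    have hu' : (0:ℝ) < u := hu
    rw [Metric.mem_ball, Real.dist_eq, abs_lt] at hy
    have hyu : (0:ℝ) < y + u := by
      have : x/2 < y := by linarith
      linarith
    have h1 : HasDerivAt (fun y : ℝ => y + u) 1 y := (hasDerivAt_id y).add_const u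
    have h2 : HasDerivAt (fun y : ℝ => (y + u) ^ b) (b * (y + u) ^ (b-1)) y := by
      have := (Real.hasDerivAt_rpow_const (x := y + u) (p := b) (Or.inl (ne_of_gt hyu))).comp y h1
      rw [mul_one] at this
      exact this
    have h3 := (h2.const_mul (u ^ k)).mul_const (Real.exp (-u))
    refine h3.congr_deriv ?_
    ring

lemma ibp (a : ℝ) {x : ℝ} (hx : 0 < x) (k : ℕ) :
    (k:ℝ) * II (a-1) (k-1) x + (a-1) * II (a-2) k x - II (a-1) k x
      = -(if k = 0 then x ^ (a-1) else 0) := by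
  set G : ℝ → ℝ := fun u => u ^ k * (x + u) ^ (a-1) * Real.exp (-u) with hG
  set G' : ℝ → ℝ := fun u =>
    (k:ℝ) * (u ^ (k-1) * (x + u) ^ (a-1) * Real.exp (-u))
    + (a-1) * (u ^ k * (x + u) ^ (a-2) * Real.exp (-u))
    - u ^ k * (x + u) ^ (a-1) * Real.exp (-u) with hG'
  have hderiv : ∀ u ∈ Ici (0:ℝ), HasDerivAt G (G' u) u := by
    intro u hu
    have hu' : (0:ℝ) ≤ u := hu
    have hxu : (0:ℝ) < x + u := by linarith
    have h1 : HasDerivAt (fun u : ℝ => u ^ k) ((k:ℝ) * u ^ (k-1)) u := hasDerivAt_pow k u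
    have h2 : HasDerivAt (fun u : ℝ => (x + u) ^ (a-1)) ((a-1) * (x + u) ^ (a-2)) u := by
      have hadd : HasDerivAt (fun u : ℝ => x + u) 1 u := (hasDerivAt_id u).const_add x
      have := (Real.hasDerivAt_rpow_const (x := x + u) (p := a-1)
        (Or.inl (ne_of_gt hxu))).comp u hadd
      have he : a - 1 - 1 = a - 2 := by ring
      rw [he, mul_one] at this
      exact this
    have h3 : HasDerivAt (fun u : ℝ => Real.exp (-u)) (-Real.exp (-u)) u := by
      simpa using (((hasDerivAt_id u).neg).exp)
    have := (h1.mul h2).mul h3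
    refine this.congr_deriv ?_
    simp only [hG', Pi.mul_apply]
    ring
  have f'int : IntegrableOn G' (Ioi 0) := by
    exact (((ibd hx (k-1)).const_mul (k:ℝ)).add ((ibd hx k).const_mul (a-1))).sub (ibd hx k)
  have htend : Tendsto G atTop (nhds 0) := by
    refine (tend0 (a-1) 1 one_pos k x).congr fun u => ?_
    simp [hG]
  have key := integral_Ioi_of_hasDerivAt_of_tendsto' hderiv f'int htend
  have hG0 : G 0 = if k = 0 then x ^ (a-1) else 0 := by
    rcases Nat.eq_zero_or_pos k with hk | hk
    · subst hk; simp [hG]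
    · have : k ≠ 0 := Nat.pos_iff_ne_zero.mp hk
      simp [hG, zero_pow this, this]
  have hi1 : Integrable (fun u : ℝ => (k:ℝ) * (u ^ (k-1) * (x + u) ^ (a-1) * Real.exp (-u)))
      (volume.restrict (Ioi 0)) := (ibd hx (k-1)).const_mul _
  have hi2 : Integrable (fun u : ℝ => (a-1) * (u ^ k * (x + u) ^ (a-2) * Real.exp (-u)))
      (volume.restrict (Ioi 0)) := (ibd hx k).const_mul _
  have hi3 : Integrable (fun u : ℝ => u ^ k * (x + u) ^ (a-1) * Real.exp (-u))
      (volume.restrict (Ioi 0)) := ibd hx k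
  have e1 : (∫ u in Ioi (0:ℝ), G' u)
      = (∫ u in Ioi (0:ℝ), ((k:ℝ) * (u ^ (k-1) * (x + u) ^ (a-1) * Real.exp (-u))
          + (a-1) * (u ^ k * (x + u) ^ (a-2) * Real.exp (-u))))
        - ∫ u in Ioi (0:ℝ), u ^ k * (x + u) ^ (a-1) * Real.exp (-u) :=
    integral_sub (hi1.add hi2) hi3
  have e2 : (∫ u in Ioi (0:ℝ), ((k:ℝ) * (u ^ (k-1) * (x + u) ^ (a-1) * Real.exp (-u))
          + (a-1) * (u ^ k * (x + u) ^ (a-2) * Real.exp (-u))))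
      = (∫ u in Ioi (0:ℝ), (k:ℝ) * (u ^ (k-1) * (x + u) ^ (a-1) * Real.exp (-u)))
        + ∫ u in Ioi (0:ℝ), (a-1) * (u ^ k * (x + u) ^ (a-2) * Real.exp (-u)) :=
    integral_add hi1 hi2
  have hsplit : ∫ u in Ioi (0:ℝ), G' u
      = (k:ℝ) * II (a-1) (k-1) x + (a-1) * II (a-2) k x - II (a-1) k x := by
    rw [e1, e2, integral_const_mul, integral_const_mul]
    rfl
  rw [hsplit, hG0] at key
  rw [key]
  ring

lemma trans_eq (g : ℝ → ℝ) (x : ℝ) (k : ℕ) :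
    (∫ t in Ioi x, (t - x) ^ k * g t) = ∫ u in Ioi (0:ℝ), (u ^ k) * g (u + x) := by
  have h := (measurePreserving_add_right volume x).setIntegral_preimage_emb
    (MeasurableEquiv.addRight x).measurableEmbedding
    (fun t => (t - x) ^ k * g t) (Ioi x)
  rw [← h]
  have hpre : ((fun u : ℝ => u + x) ⁻¹' Ioi x) = Ioi 0 := by
    ext u; simp
  rw [hpre]
  apply setIntegral_congr_fun measurableSet_Ioi
  intro u _
  dsimp only
  simp

lemma tail_eq (a : ℝ) (k : ℕ) {x : ℝ} (hx : 0 < x) :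
    (∫ t in Ioi x, (t - x) ^ k * gammaDens a t)
      = Real.exp (-x) / Real.Gamma a * II (a-1) k x := by
  rw [trans_eq]
  rw [II, ← integral_const_mul]
  apply setIntegral_congr_fun measurableSet_Ioi
  intro u hu
  have hu' : (0:ℝ) < u := hu
  dsimp only
  unfold gammaDens
  rw [add_comm u x, show -(x+u) = -x + -u by ring, Real.exp_add]
  ring

lemma Cpos (a : ℝ) (ha : 0 < a) (k : ℕ) :
    0 < ∫ t in Ioi (0:ℝ), t ^ k * gammaDens a t := by
  have hG : 0 < Real.Gamma a := Real.Gamma_pos_of_pos ha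
  have hka : (0:ℝ) < (k:ℝ) + a := by positivity
  have hint : IntegrableOn (fun t : ℝ => t ^ k * gammaDens a t) (Ioi 0) := by
    refine IntegrableOn.congr_fun
      (((Real.GammaIntegral_convergent hka).const_mul (1 / Real.Gamma a)) :) ?_ measurableSet_Ioi
    intro t ht
    have ht' : (0:ℝ) < t := ht
    dsimp only
    unfold gammaDens
    rw [show (k:ℝ) + a - 1 = (k:ℝ) + (a - 1) by ring, Real.rpow_add ht', Real.rpow_natCast]
    ring
  rw [setIntegral_pos_iff_support_of_nonneg_ae]
  · have hsub : Ioi (0:ℝ) ⊆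
        (Function.support fun t : ℝ => t ^ k * gammaDens a t) ∩ Ioi 0 := by
      intro t ht
      have ht' : (0:ℝ) < t := ht
      refine ⟨?_, ht⟩
      simp only [Function.mem_support]
      unfold gammaDens
      positivity
    calc (0:ENNReal) < volume (Ioi (0:ℝ)) := by simp [Real.volume_Ioi]
      _ ≤ _ := measure_mono hsub
  · filter_upwards [ae_restrict_mem measurableSet_Ioi] with t ht
    have ht' : (0:ℝ) < t := ht
    unfold gammaDens
    positivity
  · exact hint

lemma derivEq (a : ℝ) (ha : 0 < a) (s : ℕ) {x : ℝ} (hx : 0 < x) :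
    deriv (fun y => -Real.log (iterTail (gammaDens a) s y)) x
      = 1 - (a-1) * II (a-2) (s-1) x / II (a-1) (s-1) x := by
  set k := s - 1 with hk
  set C := ∫ t in Ioi (0:ℝ), t ^ (s-1) * gammaDens a t with hC
  have hCpos : 0 < C := Cpos a ha (s-1)
  have hG : 0 < Real.Gamma a := Real.Gamma_pos_of_pos ha
  set c := Real.log (Real.Gamma a * C) with hc
  have h1 : ∀ y ∈ Ioi (0:ℝ), -Real.log (iterTail (gammaDens a) s y)
      = y - Real.log (II (a-1) k y) + c := by
    intro y hy
    have hy' : (0:ℝ) < y := hy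
    have hIIy : 0 < II (a-1) k y := II_pos hy' k
    have hiter : iterTail (gammaDens a) s y
        = Real.exp (-y) * II (a-1) k y / (Real.Gamma a * C) := by
      rw [iterTail, tail_eq a k hy', ← hC]
      field_simp
    rw [hiter, Real.log_div (by positivity) (by positivity),
      Real.log_mul (by positivity) (by positivity), Real.log_exp, hc]
    ring
  have h2 : HasDerivAt (fun y => y - Real.log (II (a-1) k y) + c)
      (1 - (a-1) * II (a-2) k x / II (a-1) k x) x := by
    have hd : HasDerivAt (fun y => Real.log (II (a-1) k y))
        ((a-1) * II (a-2) k x / II (a-1) k x) x := by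
      have := (hasDerivAt_II (a-1) k hx).log (ne_of_gt (II_pos hx k))
      rw [show a - 1 - 1 = a - 2 by ring] at this
      exact this
    exact ((hasDerivAt_id x).sub hd).add_const c
  have heq : (fun y => -Real.log (iterTail (gammaDens a) s y))
      =ᶠ[nhds x] (fun y => y - Real.log (II (a-1) k y) + c) :=
    eventually_of_mem (Ioi_mem_nhds hx) h1
  rw [heq.deriv_eq, h2.deriv]

lemma coreMain (a x y : ℝ) (k : ℕ) (hx : 0 < x) (hy : 0 < y)
    (hbr : ∀ u v : ℝ, 0 < u → 0 < v → v < u →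
      (y+u)^(a-1) * (x+v)^(a-1) < (x+u)^(a-1) * (y+v)^(a-1)) :
    II (a-1) (k+1) y * II (a-1) k x < II (a-1) (k+1) x * II (a-1) k y := by
  set ν := volume.restrict (Ioi (0:ℝ)) with hν
  set ρ := ν.prod ν with hρ
  set f1 : ℝ → ℝ := fun u => u ^ (k+1) * (x + u) ^ (a-1) * Real.exp (-u) with hf1
  set g1 : ℝ → ℝ := fun v => v ^ k * (y + v) ^ (a-1) * Real.exp (-v) with hg1
  set f2 : ℝ → ℝ := fun u => u ^ (k+1) * (y + u) ^ (a-1) * Real.exp (-u) with hf2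
  set g2 : ℝ → ℝ := fun v => v ^ k * (x + v) ^ (a-1) * Real.exp (-v) with hg2
  have if1 : Integrable f1 ν := ibd hx (k+1)
  have ig1 : Integrable g1 ν := ibd hy k
  have if2 : Integrable f2 ν := ibd hy (k+1)
  have ig2 : Integrable g2 ν := ibd hx k
  -- A = II_{k+1}(x) * II_k(y) - II_{k+1}(y) * II_k(x)
  have hA1 : II (a-1) (k+1) x * II (a-1) k y - II (a-1) (k+1) y * II (a-1) k x
      = ∫ z : ℝ × ℝ, (f1 z.1 * g1 z.2 - f2 z.1 * g2 z.2) ∂ρ := by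
    rw [integral_sub (if1.mul_prod ig1) (if2.mul_prod ig2),
      integral_prod_mul, integral_prod_mul]
    rfl
  have hA2 : II (a-1) (k+1) x * II (a-1) k y - II (a-1) (k+1) y * II (a-1) k x
      = ∫ z : ℝ × ℝ, (g1 z.1 * f1 z.2 - g2 z.1 * f2 z.2) ∂ρ := by
    rw [integral_sub (ig1.mul_prod if1) (ig2.mul_prod if2),
      integral_prod_mul, integral_prod_mul]
    rw [show (∫ u, g1 u ∂ν) = II (a-1) k y from rfl,
      show (∫ u, f1 u ∂ν) = II (a-1) (k+1) x from rfl,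
      show (∫ u, g2 u ∂ν) = II (a-1) k x from rfl,
      show (∫ u, f2 u ∂ν) = II (a-1) (k+1) y from rfl]
    ring
  have hint1 : Integrable (fun z : ℝ × ℝ => f1 z.1 * g1 z.2 - f2 z.1 * g2 z.2) ρ :=
    (if1.mul_prod ig1).sub (if2.mul_prod ig2)
  have hint2 : Integrable (fun z : ℝ × ℝ => g1 z.1 * f1 z.2 - g2 z.1 * f2 z.2) ρ :=
    (ig1.mul_prod if1).sub (ig2.mul_prod if2)
  set H : ℝ × ℝ → ℝ := fun z => (f1 z.1 * g1 z.2 - f2 z.1 * g2 z.2)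
    + (g1 z.1 * f1 z.2 - g2 z.1 * f2 z.2) with hH
  have hHval : ∀ u v : ℝ, H (u, v)
      = u ^ k * v ^ k * (u - v) * Real.exp (-u) * Real.exp (-v)
        * ((x+u)^(a-1) * (y+v)^(a-1) - (y+u)^(a-1) * (x+v)^(a-1)) := by
    intro u v
    simp only [hH, hf1, hf2, hg1, hg2]
    ring
  have hae : ∀ᵐ z ∂ρ, z ∈ Ioi (0:ℝ) ×ˢ Ioi (0:ℝ) := by
    rw [hρ, hν, Measure.prod_restrict]
    exact ae_restrict_mem (measurableSet_Ioi.prod measurableSet_Ioi)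
  have hH0 : ∀ u v : ℝ, 0 < u → 0 < v → 0 ≤ H (u, v) := by
    intro u v hu hv
    rw [hHval]
    rcases lt_trichotomy u v with h | h | h
    · have hb := hbr v u hv hu h
      have : (x+v)^(a-1) * (y+u)^(a-1) - (y+v)^(a-1) * (x+u)^(a-1) > 0 := by linarith
      have h1 : (x+u)^(a-1) * (y+v)^(a-1) - (y+u)^(a-1) * (x+v)^(a-1) ≤ 0 := by nlinarith
      have h3 : (0:ℝ) ≤ u ^ k * v ^ k * Real.exp (-u) * Real.exp (-v) := by positivity
      nlinarith [mul_nonneg (mul_nonneg h3 (by linarith : (0:ℝ) ≤ v - u))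
        (by linarith : (0:ℝ) ≤ -((x+u)^(a-1) * (y+v)^(a-1) - (y+u)^(a-1) * (x+v)^(a-1)))]
    · subst h; simp
    · have hb := hbr u v hu hv h
      have h1 : (x+u)^(a-1) * (y+v)^(a-1) - (y+u)^(a-1) * (x+v)^(a-1) ≥ 0 := by linarith
      have h2 : 0 ≤ u - v := by linarith
      have h3 : (0:ℝ) ≤ u ^ k * v ^ k * Real.exp (-u) * Real.exp (-v) := by positivity
      positivity
  have hpos : 0 < ∫ z, H z ∂ρ := by
    rw [integral_pos_iff_support_of_nonneg_ae]
    · -- support has positive measure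
      have hsub : Ioo (1:ℝ) 2 ×ˢ Ioo (0:ℝ) 1 ⊆ Function.support H := by
        rintro ⟨u, v⟩ ⟨hu, hv⟩
        have hu1 : (1:ℝ) < u := hu.1
        have hu2 : u < 2 := hu.2
        have hv0 : (0:ℝ) < v := hv.1
        have hv1 : v < 1 := hv.2
        have huv : v < u := by linarith
        have hb := hbr u v (by linarith) hv0 huv
        simp only [Function.mem_support]
        rw [hHval]
        have h1 : (0:ℝ) < (x+u)^(a-1) * (y+v)^(a-1) - (y+u)^(a-1) * (x+v)^(a-1) := by linarith
        have h2 : (0:ℝ) < u - v := by linarith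
        have h3 : (0:ℝ) < u ^ k * v ^ k * Real.exp (-u) * Real.exp (-v) := by positivity
        positivity
      calc (0:ENNReal) < ρ (Ioo (1:ℝ) 2 ×ˢ Ioo (0:ℝ) 1) := by
            rw [hρ, Measure.prod_prod, hν, Measure.restrict_apply measurableSet_Ioo,
              Measure.restrict_apply measurableSet_Ioo]
            have e1 : Ioo (1:ℝ) 2 ∩ Ioi 0 = Ioo 1 2 := by
              ext t; simp only [mem_inter_iff, mem_Ioo, mem_Ioi]
              constructor
              · rintro ⟨h1, _⟩; exact h1
              · rintro ⟨h1, h2⟩; exact ⟨⟨h1, h2⟩, by linarith⟩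
            have e2 : Ioo (0:ℝ) 1 ∩ Ioi 0 = Ioo 0 1 := by
              ext t; simp only [mem_inter_iff, mem_Ioo, mem_Ioi]
              constructor
              · rintro ⟨h1, _⟩; exact h1
              · rintro ⟨h1, h2⟩; exact ⟨⟨h1, h2⟩, h1⟩
            rw [e1, e2, Real.volume_Ioo, Real.volume_Ioo]
            norm_num
        _ ≤ ρ (Function.support H) := measure_mono hsub
    · filter_upwards [hae] with z hz
      exact hH0 z.1 z.2 hz.1 hz.2
    · exact hint1.add hint2
  have h2A : (II (a-1) (k+1) x * II (a-1) k y - II (a-1) (k+1) y * II (a-1) k x)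
      + (II (a-1) (k+1) x * II (a-1) k y - II (a-1) (k+1) y * II (a-1) k x)
      = ∫ z, H z ∂ρ := by
    nth_rewrite 2 [hA2]
    rw [hA1, ← integral_add hint1 hint2]
  linarith

lemma int_strict {f g : ℝ → ℝ} (hf : IntegrableOn f (Ioi 0)) (hg : IntegrableOn g (Ioi 0))
    (hlt : ∀ u ∈ Ioi (0:ℝ), f u < g u) :
    (∫ u in Ioi (0:ℝ), f u) < ∫ u in Ioi (0:ℝ), g u := by
  have h0 : 0 < ∫ u in Ioi (0:ℝ), (g u - f u) := by
    rw [setIntegral_pos_iff_support_of_nonneg_ae]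
    · have hsub : Ioi (0:ℝ) ⊆ (Function.support fun u => g u - f u) ∩ Ioi 0 := by
        intro u hu
        refine ⟨?_, hu⟩
        simp only [Function.mem_support]
        have := hlt u hu
        intro hc
        rw [sub_eq_zero] at hc
        exact absurd hc.symm (ne_of_lt this)
      calc (0:ENNReal) < volume (Ioi (0:ℝ)) := by simp [Real.volume_Ioi]
        _ ≤ _ := measure_mono hsub
    · filter_upwards [ae_restrict_mem measurableSet_Ioi] with u hu
      have := hlt u hu
      simp only [Pi.zero_apply]
      linarith
    · exact hg.sub hf
  rw [integral_sub hg hf] at h0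
  linarith

lemma core0Main (a x y : ℝ) (hx : 0 < x) (hy : 0 < y)
    (hbr : ∀ u : ℝ, 0 < u → x^(a-1) * (y+u)^(a-1) < y^(a-1) * (x+u)^(a-1)) :
    x^(a-1) * II (a-1) 0 y < y^(a-1) * II (a-1) 0 x := by
  rw [II, II, ← integral_const_mul, ← integral_const_mul]
  refine int_strict ((ibd hy 0).const_mul _) ((ibd hx 0).const_mul _) ?_
  intro u hu
  have hu' : (0:ℝ) < u := hu
  have := hbr u hu'
  have hexp : (0:ℝ) < Real.exp (-u) := Real.exp_pos _
  calc x^(a-1) * (u ^ 0 * (y + u) ^ (a-1) * Real.exp (-u))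
      = x^(a-1) * (y+u)^(a-1) * Real.exp (-u) := by ring
    _ < y^(a-1) * (x+u)^(a-1) * Real.exp (-u) := by
        exact mul_lt_mul_of_pos_right this hexp
    _ = y^(a-1) * (u ^ 0 * (x + u) ^ (a-1) * Real.exp (-u)) := by ring

lemma Rval (a : ℝ) {x : ℝ} (hx : 0 < x) (k : ℕ) :
    1 - (a-1) * II (a-2) k x / II (a-1) k x
      = ((k:ℝ) * II (a-1) (k-1) x + (if k = 0 then x^(a-1) else 0)) / II (a-1) k x := by
  have hP : 0 < II (a-1) k x := II_pos hx k
  have h := ibp a hx k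
  field_simp
  linarith

/-- For `X ~ Gamma(α, 1)`, the failure rate `x ↦ (d/dx)(−log T̄_s(x))` of the s-iterated
distribution is increasing when `α > 1` and decreasing when `α < 1`. -/
theorem iterated_gamma_failure_rate_monotone (a : ℝ) (ha : 0 < a) (s : ℕ) (hs : 1 ≤ s) :
    (1 < a → StrictMonoOn
      (fun x => deriv (fun y => -Real.log (iterTail (gammaDens a) s y)) x) (Ioi 0)) ∧
    (a < 1 → StrictAntiOn
      (fun x => deriv (fun y => -Real.log (iterTail (gammaDens a) s y)) x) (Ioi 0)) := by
  constructor
  · intro hA x hx y hy hxy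
    have hx' : (0:ℝ) < x := hx
    have hy' : (0:ℝ) < y := hy
    dsimp only
    rw [derivEq a ha s hx', derivEq a ha s hy', Rval a hx' (s-1), Rval a hy' (s-1)]
    have hPx : 0 < II (a-1) (s-1) x := II_pos hx' (s-1)
    have hPy : 0 < II (a-1) (s-1) y := II_pos hy' (s-1)
    rw [div_lt_div_iff₀ hPx hPy]
    rcases Nat.eq_zero_or_pos (s-1) with hk | hk
    · rw [hk]
      simp only [Nat.cast_zero, zero_mul, zero_add, if_pos rfl]
      exact core0Main a x y hx' hy' (fun u hu => by
        have h1 : (0:ℝ) < y + u := by linarith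
        have h2 : (0:ℝ) < x + u := by linarith
        rw [← Real.mul_rpow hx'.le h1.le, ← Real.mul_rpow hy'.le h2.le]
        exact Real.rpow_lt_rpow (by positivity) (by nlinarith) (by linarith))
    · obtain ⟨m, hm⟩ := Nat.exists_eq_add_of_le hk
      rw [show s - 1 = m + 1 by omega]
      simp only [Nat.add_sub_cancel, if_neg (Nat.succ_ne_zero m), add_zero]
      push_cast
      have hcore := coreMain a x y m hx' hy' (fun u v hu hv hvu => by
        have h1 : (0:ℝ) < y + u := by linarith
        have h2 : (0:ℝ) < x + v := by linarith
        have h3 : (0:ℝ) < x + u := by linarith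
        have h4 : (0:ℝ) < y + v := by linarith
        rw [← Real.mul_rpow h1.le h2.le, ← Real.mul_rpow h3.le h4.le]
        exact Real.rpow_lt_rpow (by positivity) (by nlinarith) (by linarith))
      have hmp : (0:ℝ) < ((m:ℝ) + 1) := by positivity
      nlinarith [mul_lt_mul_of_pos_left hcore hmp]
  · intro hA x hx y hy hxy
    have hx' : (0:ℝ) < x := hx
    have hy' : (0:ℝ) < y := hy
    dsimp only
    rw [derivEq a ha s hx', derivEq a ha s hy', Rval a hx' (s-1), Rval a hy' (s-1)]
    have hPx : 0 < II (a-1) (s-1) x := II_pos hx' (s-1)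
    have hPy : 0 < II (a-1) (s-1) y := II_pos hy' (s-1)
    rw [div_lt_div_iff₀ hPy hPx]
    rcases Nat.eq_zero_or_pos (s-1) with hk | hk
    · rw [hk]
      simp only [Nat.cast_zero, zero_mul, zero_add, if_pos rfl]
      exact core0Main a y x hy' hx' (fun u hu => by
        have h1 : (0:ℝ) < y + u := by linarith
        have h2 : (0:ℝ) < x + u := by linarith
        rw [← Real.mul_rpow hy'.le h2.le, ← Real.mul_rpow hx'.le h1.le]
        exact Real.rpow_lt_rpow_of_neg (by positivity) (by nlinarith) (by linarith))
    · obtain ⟨m, hm⟩ := Nat.exists_eq_add_of_le hk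
      rw [show s - 1 = m + 1 by omega]
      simp only [Nat.add_sub_cancel, if_neg (Nat.succ_ne_zero m), add_zero]
      push_cast
      have hcore := coreMain a y x m hy' hx' (fun u v hu hv hvu => by
        have h1 : (0:ℝ) < x + u := by linarith
        have h2 : (0:ℝ) < y + v := by linarith
        have h3 : (0:ℝ) < y + u := by linarith
        have h4 : (0:ℝ) < x + v := by linarith
        rw [← Real.mul_rpow h3.le h4.le, ← Real.mul_rpow h1.le h2.le]
        exact Real.rpow_lt_rpow_of_neg (by positivity) (by nlinarith) (by linarith))
      have hmp : (0:ℝ) < ((m:ℝ) + 1) := by positivity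
      nlinarith [mul_lt_mul_of_pos_left hcore hmp]
end

section
/- Let X ~ Gamma(α, 1) with α > 0. For every s ≥ 1 and x ≥ 0, the iterated tails satisfy the recursion T̄^{α+1}_{s+1}(x) = (s/(α+s)) T̄^{α+1}_s(x) + (α/(α+s)) T̄^{α}_{s+1}(x), where T̄^{β}_s denotes the s-iterated tail induced by a Gamma(β, 1) random variable. -/
open MeasureTheory Set Real Filter Topology
set_option maxHeartbeats 1000000

/-- Tail of the s-iterated distribution induced by `Gamma(β, 1)`:
`T̄^β_s(x) = (1/Γ(β+s-1)) ∫_x^∞ (t-x)^{s-1} t^{β-1} e^{-t} dt`. -/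
noncomputable def gammaIterTail (b : ℝ) (s : ℕ) (x : ℝ) : ℝ :=
  (∫ t in Set.Ioi x, (t - x) ^ (s - 1) * (t ^ (b - 1) * Real.exp (-t))) /
    Real.Gamma (b + (s : ℝ) - 1)

lemma aux_integrable (c : ℝ) (hc : 0 < c + 1) (k : ℕ) {x : ℝ} (hx : 0 ≤ x) :
    IntegrableOn (fun t : ℝ => (t - x) ^ k * (t ^ c * Real.exp (-t))) (Ioi x) := by
  have href : IntegrableOn (fun t : ℝ => t ^ ((k : ℝ) + c) * Real.exp (-t)) (Ioi x) := by
    have hk : (0:ℝ) ≤ (k:ℝ) := Nat.cast_nonneg k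
    have h0 : (0 : ℝ) < (k : ℝ) + c + 1 := by linarith
    have h1 := (Real.GammaIntegral_convergent h0).mono_set (Ioi_subset_Ioi hx)
    have h2 : (k : ℝ) + c + 1 - 1 = (k : ℝ) + c := by ring
    rw [h2] at h1
    exact h1.congr_fun (fun t _ => by ring) measurableSet_Ioi
  refine MeasureTheory.Integrable.mono href ?_ ?_
  · apply Measurable.aestronglyMeasurable
    fun_prop
  · filter_upwards [ae_restrict_mem measurableSet_Ioi] with t ht
    have ht0 : 0 < t := lt_of_le_of_lt hx ht
    have htx : 0 ≤ t - x := by simp [le_of_lt (mem_Ioi.mp ht)]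
    rw [Real.norm_eq_abs, Real.norm_eq_abs, abs_of_nonneg (by positivity),
      abs_of_nonneg (by positivity)]
    have h3 : (t - x) ^ k ≤ t ^ k := pow_le_pow_left₀ htx (by linarith) k
    have h4 : t ^ ((k : ℝ) + c) = t ^ k * t ^ c := by
      rw [Real.rpow_add ht0, Real.rpow_natCast]
    rw [h4]
    have h5 : 0 ≤ t ^ c * Real.exp (-t) := by positivity
    calc (t - x) ^ k * (t ^ c * Real.exp (-t)) ≤ t ^ k * (t ^ c * Real.exp (-t)) :=
          mul_le_mul_of_nonneg_right h3 h5
      _ = t ^ k * t ^ c * Real.exp (-t) := by ring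

lemma key_identity (a : ℝ) (ha : 0 < a) (s : ℕ) (hs : 1 ≤ s) (x : ℝ) (hx : 0 ≤ x) :
    ∫ t in Ioi x, (t - x) ^ s * (t ^ a * Real.exp (-t))
      = ((s : ℝ) * ∫ t in Ioi x, (t - x) ^ (s - 1) * (t ^ a * Real.exp (-t)))
        + a * ∫ t in Ioi x, (t - x) ^ s * (t ^ (a - 1) * Real.exp (-t)) := by
  set F : ℝ → ℝ := fun t => (t - x) ^ s * (t ^ a * Real.exp (-t)) with hF
  set F' : ℝ → ℝ := fun t => (s : ℝ) * ((t - x) ^ (s - 1) * (t ^ a * Real.exp (-t)))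
      + a * ((t - x) ^ s * (t ^ (a - 1) * Real.exp (-t)))
      - (t - x) ^ s * (t ^ a * Real.exp (-t)) with hF'
  have hI1 : IntegrableOn (fun t : ℝ => (t - x) ^ (s - 1) * (t ^ a * Real.exp (-t))) (Ioi x) :=
    aux_integrable a (by linarith) (s - 1) hx
  have hI2 : IntegrableOn (fun t : ℝ => (t - x) ^ s * (t ^ (a - 1) * Real.exp (-t))) (Ioi x) :=
    aux_integrable (a - 1) (by linarith) s hx
  have hI3 : IntegrableOn (fun t : ℝ => (t - x) ^ s * (t ^ a * Real.exp (-t))) (Ioi x) :=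
    aux_integrable a (by linarith) s hx
  have hF'int : IntegrableOn F' (Ioi x) :=
    ((hI1.const_mul _).add (hI2.const_mul _)).sub hI3
  have hderiv : ∀ t ∈ Ioi x, HasDerivAt F (F' t) t := by
    intro t ht
    have ht0 : 0 < t := lt_of_le_of_lt hx ht
    have h1 : HasDerivAt (fun t : ℝ => (t - x) ^ s) ((s : ℝ) * (t - x) ^ (s - 1)) t := by
      simpa [Pi.pow_def] using ((hasDerivAt_id t).sub_const x).pow s
    have h2 : HasDerivAt (fun t : ℝ => t ^ a) (a * t ^ (a - 1)) t :=
      Real.hasDerivAt_rpow_const (Or.inl ht0.ne')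
    have h3 : HasDerivAt (fun t : ℝ => Real.exp (-t)) (-Real.exp (-t)) t := by
      simpa [Function.comp_def] using ((Real.hasDerivAt_exp (-t)).comp t (hasDerivAt_neg t))
    have := h1.mul (h2.mul h3)
    simp only [Pi.mul_def] at this
    refine this.congr_deriv ?_
    simp only [hF']
    ring
  have hcont : ContinuousWithinAt F (Ici x) x := by
    apply ContinuousWithinAt.mul
    · exact (continuousWithinAt_id.sub continuousWithinAt_const).pow s
    · apply ContinuousWithinAt.mul
      · apply ContinuousWithinAt.rpow_const continuousWithinAt_id
        right; exact ha.le
      · exact (Real.continuous_exp.comp continuous_neg).continuousWithinAt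
  have htends : Tendsto F atTop (𝓝 0) := by
    have h0 : Tendsto (fun t : ℝ => t ^ ((s : ℝ) + a) * Real.exp (-1 * t)) atTop (𝓝 0) :=
      tendsto_rpow_mul_exp_neg_mul_atTop_nhds_zero _ 1 one_pos
    simp only [neg_one_mul] at h0
    refine squeeze_zero' ?_ ?_ h0
    · filter_upwards [eventually_ge_atTop x] with t ht
      have : 0 ≤ t - x := by linarith
      have ht0 : 0 ≤ t := le_trans hx ht
      simp only [hF]
      positivity
    · filter_upwards [eventually_ge_atTop (max x 1)] with t ht
      have htx : x ≤ t := le_trans (le_max_left _ _) ht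
      have ht0 : 0 < t := lt_of_lt_of_le one_pos (le_trans (le_max_right _ _) ht)
      have h4 : t ^ ((s : ℝ) + a) = t ^ s * t ^ a := by
        rw [Real.rpow_add ht0, Real.rpow_natCast]
      simp only [hF]
      rw [h4]
      have h3 : (t - x) ^ s ≤ t ^ s := pow_le_pow_left₀ (by linarith) (by linarith) s
      calc (t - x) ^ s * (t ^ a * Real.exp (-t)) ≤ t ^ s * (t ^ a * Real.exp (-t)) :=
            mul_le_mul_of_nonneg_right h3 (by positivity)
        _ = t ^ s * t ^ a * Real.exp (-t) := by ring
  have hfc := integral_Ioi_of_hasDerivAt_of_tendsto hcont hderiv hF'int htends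
  have hFx : F x = 0 := by
    simp only [hF, sub_self]
    rw [zero_pow (by omega : s ≠ 0)]
    ring
  rw [hFx, sub_zero] at hfc
  have e1 : ∫ t in Ioi x, F' t
      = ((s : ℝ) * ∫ t in Ioi x, (t - x) ^ (s - 1) * (t ^ a * Real.exp (-t)))
        + (a * ∫ t in Ioi x, (t - x) ^ s * (t ^ (a - 1) * Real.exp (-t)))
        - ∫ t in Ioi x, (t - x) ^ s * (t ^ a * Real.exp (-t)) := by
    have hsum : IntegrableOn (fun t : ℝ =>
        (s : ℝ) * ((t - x) ^ (s - 1) * (t ^ a * Real.exp (-t)))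
          + a * ((t - x) ^ s * (t ^ (a - 1) * Real.exp (-t)))) (Ioi x) :=
      (hI1.const_mul ((s : ℕ) : ℝ)).add (hI2.const_mul a)
    simp only [hF']
    rw [integral_sub hsum hI3,
      integral_add (hI1.const_mul ((s : ℕ) : ℝ)) (hI2.const_mul a),
      integral_const_mul, integral_const_mul]
  rw [hfc] at e1
  linarith

/-- Recursion between iterated Gamma tails:
`T̄^{α+1}_{s+1}(x) = (s/(α+s)) T̄^{α+1}_s(x) + (α/(α+s)) T̄^{α}_{s+1}(x)`. -/
theorem gamma_iterated_tail_recursion (a : ℝ) (ha : 0 < a) (s : ℕ) (hs : 1 ≤ s)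
    (x : ℝ) (hx : 0 ≤ x) :
    gammaIterTail (a + 1) (s + 1) x
      = ((s : ℝ) / (a + s)) * gammaIterTail (a + 1) s x
        + (a / (a + s)) * gammaIterTail a (s + 1) x := by
  have has : (0 : ℝ) < a + s := by positivity
  have hG : 0 < Real.Gamma (a + s) := Real.Gamma_pos_of_pos has
  unfold gammaIterTail
  simp only [Nat.add_sub_cancel, Nat.cast_add, Nat.cast_one]
  rw [show a + 1 - 1 = a from by ring,
    show a + 1 + ((s : ℝ) + 1) - 1 = (a + s) + 1 from by ring,
    show a + 1 + (s : ℝ) - 1 = a + s from by ring,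
    show a + ((s : ℝ) + 1) - 1 = a + s from by ring,
    Real.Gamma_add_one has.ne']
  rw [key_identity a ha s hs x hx]
  field_simp
end
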